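/- Let ω > 0 and let f(ν) = sin(θ|x|)·sin(θ|y|)/sin θ where θ = θ(ν) = arccos((ω+2-ν)/2), for ν ∈ (ω, ω+4) and fixed integers x, y. Then there is a constant C_0 such that the second derivative satisfies |f''(ν)| ≤ C_0(1+|x|²)(1+|y|²)·(ν-ω)^{-3/2} for ω < ν < ω+1, and |f''(ν)| ≤ C_0(1+|x|²)(1+|y|²)·(4+ω-ν)^{-3/2} for ω+3 < ν < ω+4. -/

import Mathlib

open Real Filter Set Finset


noncomputable def th (ω ν : ℝ) : ℝ := Real.arccos ((ω + 2 - ν) / 2)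
noncomputable def sq2 (ω ν : ℝ) : ℝ := Real.sqrt (1 - ((ω + 2 - ν) / 2) ^ 2)

lemma mem_facts {ω ν : ℝ} (h : ν ∈ Set.Ioo ω (ω + 4)) :
    -1 < (ω + 2 - ν) / 2 ∧ (ω + 2 - ν) / 2 < 1 ∧ 0 < 1 - ((ω + 2 - ν) / 2) ^ 2 := by
  obtain ⟨h1, h2⟩ := h
  refine ⟨by linarith, by linarith, by nlinarith⟩

lemma sq2_pos {ω ν : ℝ} (h : ν ∈ Set.Ioo ω (ω + 4)) : 0 < sq2 ω ν :=
  Real.sqrt_pos.2 (mem_facts h).2.2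

lemma sq2_le_one {ω ν : ℝ} (h : ν ∈ Set.Ioo ω (ω + 4)) : sq2 ω ν ≤ 1 := by
  exact Real.sqrt_le_one.2 (by nlinarith [sq_nonneg ((ω + 2 - ν)/2)])

lemma sq2_sq {ω ν : ℝ} (h : ν ∈ Set.Ioo ω (ω + 4)) :
    sq2 ω ν ^ 2 = 1 - ((ω + 2 - ν) / 2) ^ 2 :=
  Real.sq_sqrt (mem_facts h).2.2.le

lemma hasDerivAt_u (ω ν : ℝ) : HasDerivAt (fun ν' : ℝ => (ω + 2 - ν') / 2) (-(1/2)) ν := by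
  have := ((hasDerivAt_id ν).const_sub (ω + 2)).div_const 2
  refine this.congr_deriv ?_
  norm_num

lemma hasDerivAt_th {ω ν : ℝ} (h : ν ∈ Set.Ioo ω (ω + 4)) :
    HasDerivAt (th ω) ((2 * sq2 ω ν)⁻¹) ν := by
  obtain ⟨h1, h2, h3⟩ := mem_facts h
  have harc := (Real.hasDerivAt_arccos (ne_of_gt h1) (ne_of_lt h2)).comp ν (hasDerivAt_u ω ν)
  have hs := sq2_pos h
  refine harc.congr_deriv ?_
  unfold sq2 at hs ⊢
  field_simp

lemma hasDerivAt_sq2 {ω ν : ℝ} (h : ν ∈ Set.Ioo ω (ω + 4)) :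
    HasDerivAt (sq2 ω) ((ω + 2 - ν) / 2 / (2 * sq2 ω ν)) ν := by
  obtain ⟨h1, h2, h3⟩ := mem_facts h
  have hin : HasDerivAt (fun ν' : ℝ => 1 - ((ω + 2 - ν') / 2) ^ 2) ((ω + 2 - ν) / 2) ν := by
    have := ((hasDerivAt_u ω ν).pow 2).const_sub 1
    refine this.congr_deriv ?_
    ring
  have := hin.sqrt (ne_of_gt h3)
  refine this.congr_deriv ?_
  all_goals rfl


lemma hasDerivAt_sinK {ω ν : ℝ} (K : ℝ) (h : ν ∈ Set.Ioo ω (ω + 4)) :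
    HasDerivAt (fun ν' => Real.sin (K * th ω ν'))
      (K * Real.cos (K * th ω ν) * (2 * sq2 ω ν)⁻¹) ν := by
  have := ((hasDerivAt_th h).const_mul K).sin
  convert this using 1
  ring

lemma hasDerivAt_term {ω ν : ℝ} (K : ℝ) (h : ν ∈ Set.Ioo ω (ω + 4)) :
    HasDerivAt (fun ν' => K * Real.cos (K * th ω ν') * (2 * sq2 ω ν')⁻¹)
      ((-(K ^ 2) * Real.sin (K * th ω ν) * sq2 ω ν
         - K * ((ω + 2 - ν) / 2) * Real.cos (K * th ω ν)) / (4 * sq2 ω ν ^ 3)) ν := by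
  have hs := sq2_pos h
  have hc : HasDerivAt (fun ν' => K * Real.cos (K * th ω ν'))
      (K * (-Real.sin (K * th ω ν) * (K * (2 * sq2 ω ν)⁻¹))) ν :=
    (((hasDerivAt_th h).const_mul K).cos).const_mul K
  have hi : HasDerivAt (fun ν' => (2 * sq2 ω ν')⁻¹)
      (-(2 * ((ω + 2 - ν) / 2 / (2 * sq2 ω ν))) / (2 * sq2 ω ν) ^ 2) ν :=
    ((hasDerivAt_sq2 h).const_mul 2).inv (by positivity)
  have := hc.mul hi
  refine this.congr_deriv ?_
  have h2 : sq2 ω ν ^ 2 = 1 - ((ω + 2 - ν) / 2) ^ 2 := sq2_sq h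
  field_simp
  ring

lemma sin_mul_sin (K t : ℝ) :
    Real.sin (K * t) * Real.sin t
      = (Real.cos ((K - 1) * t) - Real.cos ((K + 1) * t)) / 2 := by
  rw [Real.cos_sub_cos, show ((K - 1) * t + (K + 1) * t) / 2 = K * t by ring,
    show ((K - 1) * t - (K + 1) * t) / 2 = -t by ring, Real.sin_neg]
  ring

lemma sum_identity (a b : ℕ) (t : ℝ) :
    (∑ j ∈ Finset.range b, Real.sin (((a : ℝ) - b + 1 + 2 * j) * t)) * Real.sin t
      = Real.sin (t * a) * Real.sin (t * b) := by
  rw [Finset.sum_mul]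
  have h1 : ∀ j ∈ Finset.range b,
      Real.sin (((a : ℝ) - b + 1 + 2 * j) * t) * Real.sin t
        = ((fun j : ℕ => Real.cos (((a : ℝ) - b + 2 * j) * t)) j
           - (fun j : ℕ => Real.cos (((a : ℝ) - b + 2 * j) * t)) (j + 1)) / 2 := by
    intro j _
    rw [sin_mul_sin]
    push_cast
    ring_nf
  rw [Finset.sum_congr rfl h1, ← Finset.sum_div, Finset.sum_range_sub']
  rw [Real.cos_sub_cos]
  push_cast
  rw [show (((a:ℝ) - b + 2 * 0) * t + ((a:ℝ) - b + 2 * b) * t) / 2 = t * a by ring,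
    show (((a:ℝ) - b + 2 * 0) * t - ((a:ℝ) - b + 2 * b) * t) / 2 = -(t * b) by ring,
    Real.sin_neg]
  ring


lemma sin_th_eq {ω ν : ℝ} (h : ν ∈ Set.Ioo ω (ω + 4)) : Real.sin (th ω ν) = sq2 ω ν :=
  Real.sin_arccos _

lemma f_eq_g (ω : ℝ) (a b : ℕ) {ν : ℝ} (h : ν ∈ Set.Ioo ω (ω + 4)) :
    Real.sin (th ω ν * a) * Real.sin (th ω ν * b) / Real.sin (th ω ν)
      = ∑ j ∈ Finset.range b, Real.sin (((a : ℝ) - b + 1 + 2 * j) * th ω ν) := by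
  have hs : Real.sin (th ω ν) ≠ 0 := by
    rw [sin_th_eq h]; exact (sq2_pos h).ne'
  rw [div_eq_iff hs, ← sum_identity a b (th ω ν)]

-- core bound
lemma aux_bound (ω : ℝ) (a b : ℕ) (hba : b ≤ a) (ν : ℝ) (hν : ν ∈ Set.Ioo ω (ω + 4)) :
    |deriv (deriv (fun ν' : ℝ =>
        Real.sin (Real.arccos ((ω + 2 - ν') / 2) * a) *
          Real.sin (Real.arccos ((ω + 2 - ν') / 2) * b) /
          Real.sin (Real.arccos ((ω + 2 - ν') / 2)))) ν|
      ≤ 5 / 4 * ((1 + (a : ℝ) ^ 2) * (1 + (b : ℝ) ^ 2)) /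
        ((1 - ((ω + 2 - ν) / 2) ^ 2) * Real.sqrt (1 - ((ω + 2 - ν) / 2) ^ 2)) := by
  set k : ℕ → ℝ := fun j => (a : ℝ) - b + 1 + 2 * j with hk
  set g : ℝ → ℝ := fun ν' => ∑ j ∈ Finset.range b, Real.sin (k j * th ω ν') with hg
  set g1 : ℝ → ℝ := fun ν' =>
    ∑ j ∈ Finset.range b, k j * Real.cos (k j * th ω ν') * (2 * sq2 ω ν')⁻¹ with hg1
  have hmem : ∀ᶠ ν' in nhds ν, ν' ∈ Set.Ioo ω (ω + 4) := isOpen_Ioo.eventually_mem hν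
  have hfg : (fun ν' : ℝ =>
        Real.sin (Real.arccos ((ω + 2 - ν') / 2) * a) *
          Real.sin (Real.arccos ((ω + 2 - ν') / 2) * b) /
          Real.sin (Real.arccos ((ω + 2 - ν') / 2))) =ᶠ[nhds ν] g :=
    hmem.mono fun ν' h' => f_eq_g ω a b h'
  have hgd : ∀ ν' ∈ Set.Ioo ω (ω + 4), HasDerivAt g (g1 ν') ν' := by
    intro ν' h'
    exact HasDerivAt.fun_sum fun j _ => hasDerivAt_sinK (k j) h'
  have hdg : deriv (fun ν' : ℝ =>
        Real.sin (Real.arccos ((ω + 2 - ν') / 2) * a) *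
          Real.sin (Real.arccos ((ω + 2 - ν') / 2) * b) /
          Real.sin (Real.arccos ((ω + 2 - ν') / 2))) =ᶠ[nhds ν] g1 :=
    hfg.deriv.trans (hmem.mono fun ν' h' => (hgd ν' h').deriv)
  have hD : HasDerivAt g1 (∑ j ∈ Finset.range b,
      (-(k j ^ 2) * Real.sin (k j * th ω ν) * sq2 ω ν
        - k j * ((ω + 2 - ν) / 2) * Real.cos (k j * th ω ν)) / (4 * sq2 ω ν ^ 3)) ν :=
    HasDerivAt.fun_sum fun j _ => hasDerivAt_term (k j) hν
  rw [hdg.deriv_eq, hD.deriv]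
  -- now bound the sum
  have hs := sq2_pos hν
  have hs1 := sq2_le_one hν
  obtain ⟨hu1, hu2, hw⟩ := mem_facts hν
  have hkb : ∀ j ∈ Finset.range b, |k j| ≤ (a : ℝ) + b := by
    intro j hj
    have hjb : (j : ℝ) ≤ (b : ℝ) - 1 := by
      have := Finset.mem_range.1 hj
      have : (j : ℝ) + 1 ≤ b := by exact_mod_cast this
      linarith
    have hb0 : (0 : ℝ) ≤ b := Nat.cast_nonneg b
    have ha0 : (0 : ℝ) ≤ a := Nat.cast_nonneg a
    have hj0 : (0 : ℝ) ≤ j := Nat.cast_nonneg j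
    rw [hk, abs_le]
    constructor <;> simp only [] <;> nlinarith
  have hs3 : (0:ℝ) < 4 * sq2 ω ν ^ 3 := by positivity
  have hterm : ∀ j ∈ Finset.range b,
      |(-(k j ^ 2) * Real.sin (k j * th ω ν) * sq2 ω ν
        - k j * ((ω + 2 - ν) / 2) * Real.cos (k j * th ω ν)) / (4 * sq2 ω ν ^ 3)|
      ≤ (((a : ℝ) + b) ^ 2 + ((a : ℝ) + b)) / (4 * sq2 ω ν ^ 3) := by
    intro j hj
    rw [abs_div, abs_of_pos hs3]
    gcongr
    have hK := hkb j hj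
    have hK0 := abs_nonneg (k j)
    have hsin : |Real.sin (k j * th ω ν)| ≤ 1 := Real.abs_sin_le_one _
    have hcos : |Real.cos (k j * th ω ν)| ≤ 1 := Real.abs_cos_le_one _
    have hu : |(ω + 2 - ν) / 2| ≤ 1 := abs_le.2 ⟨hu1.le, hu2.le⟩
    have htr : |(-(k j ^ 2) * Real.sin (k j * th ω ν) * sq2 ω ν
        - k j * ((ω + 2 - ν) / 2) * Real.cos (k j * th ω ν))|
        ≤ |(-(k j ^ 2) * Real.sin (k j * th ω ν) * sq2 ω ν)|
          + |(k j * ((ω + 2 - ν) / 2) * Real.cos (k j * th ω ν))| := by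
      rw [sub_eq_add_neg]
      exact (abs_add_le _ _).trans (by rw [abs_neg])
    have hx : |(-(k j ^ 2) * Real.sin (k j * th ω ν) * sq2 ω ν)| ≤ k j ^ 2 := by
      rw [abs_mul, abs_mul, abs_neg, abs_of_nonneg (sq_nonneg _), abs_of_pos hs]
      calc k j ^ 2 * |Real.sin (k j * th ω ν)| * sq2 ω ν
          ≤ k j ^ 2 * 1 * 1 := by
            apply mul_le_mul (mul_le_mul le_rfl hsin (abs_nonneg _) (sq_nonneg _)) hs1 hs.le
            positivity
        _ = k j ^ 2 := by ring
    have hy : |(k j * ((ω + 2 - ν) / 2) * Real.cos (k j * th ω ν))| ≤ |k j| := by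
      rw [abs_mul, abs_mul]
      calc |k j| * |(ω + 2 - ν) / 2| * |Real.cos (k j * th ω ν)|
          ≤ |k j| * 1 * 1 := by
            apply mul_le_mul (mul_le_mul le_rfl hu (abs_nonneg _) hK0) hcos (abs_nonneg _)
            positivity
        _ = |k j| := by ring
    have hsq : k j ^ 2 ≤ ((a:ℝ) + b) ^ 2 := by
      nlinarith [sq_abs (k j)]
    linarith
  have hnum : (b:ℝ) * ((((a:ℝ) + b) ^ 2 + ((a:ℝ) + b))) ≤ 5 * ((1 + (a:ℝ) ^ 2) * (1 + (b:ℝ) ^ 2)) := by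
    have hba' : (b:ℝ) ≤ a := Nat.cast_le.2 hba
    rcases Nat.eq_zero_or_pos b with h0 | h1
    · subst h0
      simp only [Nat.cast_zero, zero_mul]
      positivity
    · have hb1 : (1:ℝ) ≤ b := Nat.one_le_cast.2 h1
      have ha1 : (1:ℝ) ≤ a := le_trans hb1 hba'
      nlinarith [mul_nonneg (mul_nonneg (sub_nonneg.2 hb1) (sq_nonneg ((a:ℝ)))) (sub_nonneg.2 hb1),
        mul_nonneg (sub_nonneg.2 hba') (sq_nonneg ((b:ℝ))),
        mul_nonneg (mul_nonneg (sub_nonneg.2 ha1) (sub_nonneg.2 hb1)) (mul_nonneg (le_trans zero_le_one ha1) (le_trans zero_le_one hb1))]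
  calc |∑ j ∈ Finset.range b,
      (-(k j ^ 2) * Real.sin (k j * th ω ν) * sq2 ω ν
        - k j * ((ω + 2 - ν) / 2) * Real.cos (k j * th ω ν)) / (4 * sq2 ω ν ^ 3)|
      ≤ ∑ j ∈ Finset.range b, |(-(k j ^ 2) * Real.sin (k j * th ω ν) * sq2 ω ν
        - k j * ((ω + 2 - ν) / 2) * Real.cos (k j * th ω ν)) / (4 * sq2 ω ν ^ 3)| :=
      Finset.abs_sum_le_sum_abs _ _
    _ ≤ ∑ _j ∈ Finset.range b, (((a : ℝ) + b) ^ 2 + ((a : ℝ) + b)) / (4 * sq2 ω ν ^ 3) :=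
      Finset.sum_le_sum hterm
    _ = (b:ℝ) * ((((a:ℝ) + b) ^ 2 + ((a:ℝ) + b))) / (4 * sq2 ω ν ^ 3) := by
      rw [Finset.sum_const, Finset.card_range, nsmul_eq_mul]
      ring
    _ ≤ 5 * ((1 + (a:ℝ) ^ 2) * (1 + (b:ℝ) ^ 2)) / (4 * sq2 ω ν ^ 3) := by
      gcongr
    _ = 5 / 4 * ((1 + (a : ℝ) ^ 2) * (1 + (b : ℝ) ^ 2)) /
        ((1 - ((ω + 2 - ν) / 2) ^ 2) * Real.sqrt (1 - ((ω + 2 - ν) / 2) ^ 2)) := by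
      have h3 : sq2 ω ν ^ 3 = (1 - ((ω + 2 - ν) / 2) ^ 2) * sq2 ω ν := by
        rw [pow_succ, sq2_sq hν]
      have hX : (0:ℝ) < (1 - ((ω + 2 - ν) / 2) ^ 2) * sq2 ω ν := mul_pos hw hs
      rw [h3, show Real.sqrt (1 - ((ω + 2 - ν) / 2) ^ 2) = sq2 ω ν from rfl,
        div_eq_div_iff (mul_pos (by norm_num : (0:ℝ) < 4) hX).ne' hX.ne']
      ring

lemma rpow_inv_eq {t : ℝ} (ht : 0 < t) : t ^ (-(3:ℝ)/2) = (t * Real.sqrt t)⁻¹ := by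
  rw [show (-(3:ℝ)/2) = -(3/2) by ring, Real.rpow_neg ht.le]
  congr 1
  rw [show ((3:ℝ)/2) = 1 + 1/2 by ring, Real.rpow_add ht, Real.rpow_one, ← Real.sqrt_eq_rpow]

lemma gen_edge {t w : ℝ} (ht : 0 < t) (hw : 3/4 * t ≤ w) :
    (w * Real.sqrt w)⁻¹ ≤ 2 * t ^ (-(3:ℝ)/2) := by
  have hw0 : 0 < w := lt_of_lt_of_le (by linarith) hw
  have hst : 0 < Real.sqrt t := Real.sqrt_pos.2 ht
  have hsw : 0 < Real.sqrt w := Real.sqrt_pos.2 hw0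
  rw [rpow_inv_eq ht]
  have h2 : (2:ℝ)/3 * Real.sqrt t ≤ Real.sqrt w := by
    have h1 : Real.sqrt (3/4 * t) ≤ Real.sqrt w := Real.sqrt_le_sqrt hw
    have h3 : (2:ℝ)/3 * Real.sqrt t ≤ Real.sqrt (3/4 * t) := by
      rw [Real.sqrt_mul (by norm_num) t]
      have : (2:ℝ)/3 ≤ Real.sqrt (3/4) := by
        rw [show (2:ℝ)/3 = Real.sqrt ((2/3)^2) by rw [Real.sqrt_sq (by norm_num)]]
        exact Real.sqrt_le_sqrt (by norm_num)
      nlinarith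
    linarith
  have key : t * Real.sqrt t ≤ 2 * (w * Real.sqrt w) := by
    calc t * Real.sqrt t ≤ (4/3 * w) * (3/2 * Real.sqrt w) := by
          apply mul_le_mul (by linarith) (by linarith) hst.le (by positivity)
      _ = 2 * (w * Real.sqrt w) := by ring
  rw [show (2:ℝ) * (t * Real.sqrt t)⁻¹ = ((t * Real.sqrt t)/2)⁻¹ by
    rw [inv_div]; ring]
  exact inv_anti₀ (by positivity) (by linarith)

lemma semi_bound (ω : ℝ) (a b : ℕ) (ν : ℝ) (hν : ν ∈ Set.Ioo ω (ω + 4)) :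
    |deriv (deriv (fun ν' : ℝ =>
        Real.sin (Real.arccos ((ω + 2 - ν') / 2) * a) *
          Real.sin (Real.arccos ((ω + 2 - ν') / 2) * b) /
          Real.sin (Real.arccos ((ω + 2 - ν') / 2)))) ν|
      ≤ 5 / 4 * ((1 + (a : ℝ) ^ 2) * (1 + (b : ℝ) ^ 2)) /
        ((1 - ((ω + 2 - ν) / 2) ^ 2) * Real.sqrt (1 - ((ω + 2 - ν) / 2) ^ 2)) := by
  rcases le_total b a with hba | hab
  · exact aux_bound ω a b hba ν hν
  · have hswap : (fun ν' : ℝ =>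
        Real.sin (Real.arccos ((ω + 2 - ν') / 2) * a) *
          Real.sin (Real.arccos ((ω + 2 - ν') / 2) * b) /
          Real.sin (Real.arccos ((ω + 2 - ν') / 2)))
        = (fun ν' : ℝ =>
        Real.sin (Real.arccos ((ω + 2 - ν') / 2) * b) *
          Real.sin (Real.arccos ((ω + 2 - ν') / 2) * a) /
          Real.sin (Real.arccos ((ω + 2 - ν') / 2))) := by
      funext ν'; ring
    rw [hswap]
    calc _ ≤ 5 / 4 * ((1 + (b : ℝ) ^ 2) * (1 + (a : ℝ) ^ 2)) /
        ((1 - ((ω + 2 - ν) / 2) ^ 2) * Real.sqrt (1 - ((ω + 2 - ν) / 2) ^ 2)) :=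
        aux_bound ω b a hab ν hν
      _ = _ := by ring

theorem edge_second_derivative_bound (ω : ℝ) (hω : 0 < ω) :
    ∃ C₀ : ℝ, 0 < C₀ ∧ ∀ (x y : ℤ) (ν : ℝ),
      (ν ∈ Set.Ioo ω (ω + 1) →
        |deriv (deriv (fun ν' : ℝ =>
            Real.sin (Real.arccos ((ω + 2 - ν') / 2) * |(x : ℝ)|) *
              Real.sin (Real.arccos ((ω + 2 - ν') / 2) * |(y : ℝ)|) /
              Real.sin (Real.arccos ((ω + 2 - ν') / 2)))) ν|
          ≤ C₀ * (1 + |(x : ℝ)| ^ 2) * (1 + |(y : ℝ)| ^ 2) * (ν - ω) ^ (-(3:ℝ)/2)) ∧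
      (ν ∈ Set.Ioo (ω + 3) (ω + 4) →
        |deriv (deriv (fun ν' : ℝ =>
            Real.sin (Real.arccos ((ω + 2 - ν') / 2) * |(x : ℝ)|) *
              Real.sin (Real.arccos ((ω + 2 - ν') / 2) * |(y : ℝ)|) /
              Real.sin (Real.arccos ((ω + 2 - ν') / 2)))) ν|
          ≤ C₀ * (1 + |(x : ℝ)| ^ 2) * (1 + |(y : ℝ)| ^ 2) * (4 + ω - ν) ^ (-(3:ℝ)/2)) := by
  refine ⟨3, by norm_num, fun x y ν => ?_⟩
  have hax : |(x : ℝ)| = ((x.natAbs : ℝ)) := by rw [Nat.cast_natAbs, Int.cast_abs]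
  have hay : |(y : ℝ)| = ((y.natAbs : ℝ)) := by rw [Nat.cast_natAbs, Int.cast_abs]
  set a := x.natAbs
  set b := y.natAbs
  have hM : (0:ℝ) ≤ (1 + (a : ℝ) ^ 2) * (1 + (b : ℝ) ^ 2) := by positivity
  constructor
  · intro hν
    rw [hax, hay]
    have hν4 : ν ∈ Set.Ioo ω (ω + 4) := ⟨hν.1, by linarith [hν.2]⟩
    have ht : 0 < ν - ω := by linarith [hν.1]
    have hw34 : 3/4 * (ν - ω) ≤ 1 - ((ω + 2 - ν) / 2) ^ 2 := by nlinarith [hν.2, hν.1]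
    have hedge := gen_edge ht hw34
    have hT : (0:ℝ) ≤ (ν - ω) ^ (-(3:ℝ)/2) := Real.rpow_nonneg ht.le _
    have hwpos := (mem_facts hν4).2.2
    calc |deriv (deriv (fun ν' : ℝ =>
            Real.sin (Real.arccos ((ω + 2 - ν') / 2) * a) *
              Real.sin (Real.arccos ((ω + 2 - ν') / 2) * b) /
              Real.sin (Real.arccos ((ω + 2 - ν') / 2)))) ν|
        ≤ 5 / 4 * ((1 + (a : ℝ) ^ 2) * (1 + (b : ℝ) ^ 2)) /
          ((1 - ((ω + 2 - ν) / 2) ^ 2) * Real.sqrt (1 - ((ω + 2 - ν) / 2) ^ 2)) :=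
        semi_bound ω a b ν hν4
      _ = 5 / 4 * ((1 + (a : ℝ) ^ 2) * (1 + (b : ℝ) ^ 2)) *
          ((1 - ((ω + 2 - ν) / 2) ^ 2) * Real.sqrt (1 - ((ω + 2 - ν) / 2) ^ 2))⁻¹ := by
        rw [div_eq_mul_inv]
      _ ≤ 5 / 4 * ((1 + (a : ℝ) ^ 2) * (1 + (b : ℝ) ^ 2)) * (2 * (ν - ω) ^ (-(3:ℝ)/2)) := by
        apply mul_le_mul_of_nonneg_left hedge (by positivity)
      _ ≤ 3 * (1 + (a : ℝ) ^ 2) * (1 + (b : ℝ) ^ 2) * (ν - ω) ^ (-(3:ℝ)/2) := by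
        nlinarith [mul_nonneg hM hT]
  · intro hν
    rw [hax, hay]
    have hν4 : ν ∈ Set.Ioo ω (ω + 4) := ⟨by linarith [hν.1], hν.2⟩
    have ht : 0 < 4 + ω - ν := by linarith [hν.2]
    have hw34 : 3/4 * (4 + ω - ν) ≤ 1 - ((ω + 2 - ν) / 2) ^ 2 := by nlinarith [hν.2, hν.1]
    have hedge := gen_edge ht hw34
    have hT : (0:ℝ) ≤ (4 + ω - ν) ^ (-(3:ℝ)/2) := Real.rpow_nonneg ht.le _
    calc |deriv (deriv (fun ν' : ℝ =>
            Real.sin (Real.arccos ((ω + 2 - ν') / 2) * a) *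
              Real.sin (Real.arccos ((ω + 2 - ν') / 2) * b) /
              Real.sin (Real.arccos ((ω + 2 - ν') / 2)))) ν|
        ≤ 5 / 4 * ((1 + (a : ℝ) ^ 2) * (1 + (b : ℝ) ^ 2)) /
          ((1 - ((ω + 2 - ν) / 2) ^ 2) * Real.sqrt (1 - ((ω + 2 - ν) / 2) ^ 2)) :=
        semi_bound ω a b ν hν4
      _ = 5 / 4 * ((1 + (a : ℝ) ^ 2) * (1 + (b : ℝ) ^ 2)) *
          ((1 - ((ω + 2 - ν) / 2) ^ 2) * Real.sqrt (1 - ((ω + 2 - ν) / 2) ^ 2))⁻¹ := by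
        rw [div_eq_mul_inv]
      _ ≤ 5 / 4 * ((1 + (a : ℝ) ^ 2) * (1 + (b : ℝ) ^ 2)) * (2 * (4 + ω - ν) ^ (-(3:ℝ)/2)) := by
        apply mul_le_mul_of_nonneg_left hedge (by positivity)
      _ ≤ 3 * (1 + (a : ℝ) ^ 2) * (1 + (b : ℝ) ^ 2) * (4 + ω - ν) ^ (-(3:ℝ)/2) := by
        nlinarith [mul_nonneg hM hT]
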